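/- Let L = M N^{-1}, where M is the upper bidiagonal n×n matrix with diagonal entries z_1,…,z_n and superdiagonal entries -1, and N is the lower bidiagonal n×n matrix with diagonal entries 1 and subdiagonal entries -Q_1 z_1, …, -Q_{n-1} z_{n-1}. Then det(ζE - L) = Σ_{i=0}^{n} (-1)^i F_i(z,Q) ζ^{n-i}, where F_i(z,Q) = Σ_{J ⊆ {1,…,n}, |J|=i} ∏_{j∈J, j+1∉J} (1-Q_j) ∏_{j∈J} z_j. -/

import Mathlib

open Matrix Polynomial

/-- The conserved quantities of the relativistic Toda lattice:
`F_i(z,Q) = Σ_{J ⊆ {1,…,n}, |J|=i} ∏_{j∈J, j+1∉J} (1-Q_j) ∏_{j∈J} z_j`. -/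
noncomputable def todaF {K : Type*} [Field K] (n : ℕ) (z Q : ℕ → K) (i : ℕ) : K :=
  ∑ J ∈ (Finset.Icc 1 n).powersetCard i,
    (∏ j ∈ J.filter (fun j => j + 1 ∉ J), (1 - Q j)) * ∏ j ∈ J, z j

section Aux

variable {K : Type*} [Field K] (z Q : ℕ → K)

/-- Variant of `todaF` where the factor `(1 - Q j)` is dropped for `j = n`. -/
noncomputable def todaG (n : ℕ) (i : ℕ) : K :=
  ∑ J ∈ (Finset.Icc 1 n).powersetCard i,
    (∏ j ∈ J.filter (fun j => j + 1 ∉ J ∧ j + 1 ≤ n), (1 - Q j)) * ∏ j ∈ J, z j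

noncomputable def Ppoly (n : ℕ) : Polynomial K :=
  ∑ i ∈ Finset.range (n + 1), (-1) ^ i * C (todaF n z Q i) * X ^ (n - i)

noncomputable def Spoly (n : ℕ) : Polynomial K :=
  ∑ i ∈ Finset.range (n + 1), (-1) ^ i * C (todaG z Q n i) * X ^ (n - i)

/-- The tridiagonal matrix `ζ N - M`. -/
noncomputable def tmat (n : ℕ) : Matrix (Fin n) (Fin n) (Polynomial K) :=
  Matrix.of fun p q =>
    if (p : ℕ) = q then X - C (z (p + 1))
    else if (p : ℕ) + 1 = q then 1
    else if (q : ℕ) + 1 = p then -(X * C (Q (q + 1) * z (q + 1)))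
    else 0

theorem todaF_zero (n : ℕ) : todaF n z Q 0 = 1 := by
  simp [todaF]

theorem todaG_zero (n : ℕ) : todaG z Q n 0 = 1 := by
  simp [todaG]

theorem todaF_eq_zero {n i : ℕ} (h : n < i) : todaF n z Q i = 0 := by
  rw [todaF, Finset.powersetCard_eq_empty.2 (by simpa using h), Finset.sum_empty]

theorem sum_split (n i : ℕ) (f : Finset ℕ → K) :
    ∑ J ∈ (Finset.Icc 1 (n + 1)).powersetCard (i + 1), f J =
      (∑ J ∈ (Finset.Icc 1 n).powersetCard (i + 1), f J)
      + ∑ J ∈ (Finset.Icc 1 n).powersetCard i, f (insert (n + 1) J) := by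
  classical
  have hnot : (n + 1) ∉ Finset.Icc 1 n := by simp
  rw [← Finset.insert_Icc_right_eq_Icc_add_one (by omega : 1 ≤ n + 1),
    Finset.powersetCard_succ_insert hnot, Finset.sum_union ?_, Finset.sum_image ?_]
  · intro J1 h1 J2 h2 h
    have m1 : (n + 1) ∉ J1 := fun hm => hnot ((Finset.mem_powersetCard.1 h1).1 hm)
    have m2 : (n + 1) ∉ J2 := fun hm => hnot ((Finset.mem_powersetCard.1 h2).1 hm)
    rw [← Finset.erase_insert m1, ← Finset.erase_insert m2, h]
  · rw [Finset.disjoint_right]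
    intro J hJ hJ'
    obtain ⟨J', _, rfl⟩ := Finset.mem_image.1 hJ
    exact hnot ((Finset.mem_powersetCard.1 hJ').1 (Finset.mem_insert_self _ _))

theorem todaF_succ (n i : ℕ) :
    todaF (n + 1) z Q (i + 1) =
      todaF n z Q (i + 1) + (1 - Q (n + 1)) * (z (n + 1) * todaG z Q n i) := by
  classical
  rw [todaF, sum_split, todaF, todaG, Finset.mul_sum, Finset.mul_sum]
  congr 1
  apply Finset.sum_congr rfl
  intro J hJ
  have hsub := (Finset.mem_powersetCard.1 hJ).1
  have hmem : ∀ j ∈ J, 1 ≤ j ∧ j ≤ n := fun j h => Finset.mem_Icc.1 (hsub h)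
  have hn1 : (n + 1) ∉ J := fun h => by have := hmem _ h; omega
  have hfil : (insert (n + 1) J).filter (fun j => j + 1 ∉ insert (n + 1) J)
      = insert (n + 1) (J.filter (fun j => j + 1 ∉ J ∧ j + 1 ≤ n)) := by
    rw [Finset.filter_insert, if_pos]
    · congr 1
      apply Finset.filter_congr
      intro j hj
      have := hmem j hj
      simp only [Finset.mem_insert, not_or]
      constructor
      · rintro ⟨h1, h2⟩; exact ⟨h2, by omega⟩
      · rintro ⟨h1, h2⟩; exact ⟨by omega, h1⟩
    · simp only [Finset.mem_insert, not_or]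
      exact ⟨by omega, fun h => by have := hmem _ h; omega⟩
  have hn1' : (n + 1) ∉ J.filter (fun j => j + 1 ∉ J ∧ j + 1 ≤ n) :=
    fun h => hn1 (Finset.mem_of_mem_filter _ h)
  rw [hfil, Finset.prod_insert hn1', Finset.prod_insert hn1]
  ring

theorem todaG_succ (n i : ℕ) :
    todaG z Q (n + 1) (i + 1) = todaF n z Q (i + 1) + z (n + 1) * todaG z Q n i := by
  classical
  rw [todaG, sum_split, todaF, todaG, Finset.mul_sum]
  congr 1
  · apply Finset.sum_congr rfl
    intro J hJ
    have hsub := (Finset.mem_powersetCard.1 hJ).1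
    have hmem : ∀ j ∈ J, 1 ≤ j ∧ j ≤ n := fun j h => Finset.mem_Icc.1 (hsub h)
    congr 1
    apply Finset.prod_congr ?_ (fun _ _ => rfl)
    apply Finset.filter_congr
    intro j hj
    have := hmem j hj
    constructor
    · rintro ⟨h1, _⟩; exact h1
    · intro h1; exact ⟨h1, by omega⟩
  · apply Finset.sum_congr rfl
    intro J hJ
    have hsub := (Finset.mem_powersetCard.1 hJ).1
    have hmem : ∀ j ∈ J, 1 ≤ j ∧ j ≤ n := fun j h => Finset.mem_Icc.1 (hsub h)
    have hn1 : (n + 1) ∉ J := fun h => by have := hmem _ h; omega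
    have hfil : (insert (n + 1) J).filter
        (fun j => j + 1 ∉ insert (n + 1) J ∧ j + 1 ≤ n + 1)
        = J.filter (fun j => j + 1 ∉ J ∧ j + 1 ≤ n) := by
      rw [Finset.filter_insert, if_neg (fun h => by omega)]
      apply Finset.filter_congr
      intro j hj
      have := hmem j hj
      simp only [Finset.mem_insert, not_or]
      constructor
      · rintro ⟨⟨h1, h2⟩, _⟩; exact ⟨h2, by omega⟩
      · rintro ⟨h1, h2⟩; exact ⟨⟨by omega, h1⟩, by omega⟩
    rw [hfil, Finset.prod_insert hn1]
    ring

theorem shifted_sum (n : ℕ) :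
    (∑ i ∈ Finset.range (n + 1),
        (-1 : Polynomial K) ^ (i + 1) * C (todaF n z Q (i + 1)) * X ^ (n - i))
      + X ^ (n + 1) = X * Ppoly z Q n := by
  rw [Ppoly, Finset.mul_sum, Finset.sum_range_succ, todaF_eq_zero z Q (by omega),
    Finset.sum_range_succ']
  simp only [C_0, mul_zero, zero_mul, add_zero, pow_zero, one_mul, Nat.sub_zero,
    Nat.sub_self, mul_one, todaF_zero, C_1]
  congr 1
  · apply Finset.sum_congr rfl
    intro i hi
    have hi' := Finset.mem_range.1 hi
    have h : n - i = (n - (i + 1)) + 1 := by omega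
    rw [h, pow_succ]
    ring
  · rw [pow_succ]; ring

theorem Ppoly_succ (n : ℕ) :
    Ppoly z Q (n + 1) = X * Ppoly z Q n
      - (1 - C (Q (n + 1))) * C (z (n + 1)) * Spoly z Q n := by
  rw [Ppoly, Finset.sum_range_succ']
  have h1 : ∀ i ∈ Finset.range (n + 1),
      (-1 : Polynomial K) ^ (i + 1) * C (todaF (n + 1) z Q (i + 1)) * X ^ (n + 1 - (i + 1))
      = (-1) ^ (i + 1) * C (todaF n z Q (i + 1)) * X ^ (n - i)
        - (1 - C (Q (n + 1))) * C (z (n + 1))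
          * ((-1) ^ i * C (todaG z Q n i) * X ^ (n - i)) := by
    intro i _
    rw [todaF_succ, C_add, C_mul, C_mul, C_sub, C_1, Nat.succ_sub_succ, pow_succ]
    ring
  rw [Finset.sum_congr rfl h1, Finset.sum_sub_distrib, ← Finset.mul_sum, ← Spoly,
    todaF_zero, C_1]
  simp only [pow_zero, one_mul, Nat.sub_zero]
  rw [← shifted_sum]
  ring

theorem Spoly_succ (n : ℕ) :
    Spoly z Q (n + 1) = X * Ppoly z Q n - C (z (n + 1)) * Spoly z Q n := by
  rw [Spoly, Finset.sum_range_succ']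
  have h1 : ∀ i ∈ Finset.range (n + 1),
      (-1 : Polynomial K) ^ (i + 1) * C (todaG z Q (n + 1) (i + 1)) * X ^ (n + 1 - (i + 1))
      = (-1) ^ (i + 1) * C (todaF n z Q (i + 1)) * X ^ (n - i)
        - C (z (n + 1)) * ((-1) ^ i * C (todaG z Q n i) * X ^ (n - i)) := by
    intro i _
    rw [todaG_succ, C_add, C_mul, Nat.succ_sub_succ, pow_succ]
    ring
  rw [Finset.sum_congr rfl h1, Finset.sum_sub_distrib, ← Finset.mul_sum, ← Spoly,
    todaG_zero, C_1]
  simp only [pow_zero, one_mul, Nat.sub_zero]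
  rw [← shifted_sum]
  ring

theorem Ppoly_eq (n : ℕ) :
    Ppoly z Q (n + 1) = Spoly z Q (n + 1) + C (Q (n + 1) * z (n + 1)) * Spoly z Q n := by
  rw [Ppoly_succ, Spoly_succ, Polynomial.C_mul]; ring

theorem Spoly_two_step (n : ℕ) :
    Spoly z Q (n + 2) = (X - C (z (n + 2))) * Spoly z Q (n + 1)
      + X * C (Q (n + 1) * z (n + 1)) * Spoly z Q n := by
  rw [Spoly_succ z Q (n + 1), Ppoly_eq]; ring

theorem tmat_submatrix {m n : ℕ} (f g : Fin m → Fin n) (hf : ∀ k, (f k : ℕ) = k)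
    (hg : ∀ k, (g k : ℕ) = k) : (tmat z Q n).submatrix f g = tmat z Q m := by
  ext p q
  simp only [tmat, submatrix_apply, of_apply, hf, hg]

theorem Spoly_zero : Spoly z Q 0 = 1 := by
  simp [Spoly, todaG_zero]

theorem Spoly_one : Spoly z Q 1 = X - C (z 1) := by
  have h1 : todaG z Q 1 1 = z 1 := by
    rw [todaG_succ, todaF_eq_zero z Q (by norm_num), todaG_zero, zero_add, mul_one]
  simp [Spoly, Finset.sum_range_succ, todaG_zero, h1]
  ring

theorem tmat_apply {n : ℕ} (p q : Fin n) (a b : ℕ) (hp : (p : ℕ) = a) (hq : (q : ℕ) = b) :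
    tmat z Q n p q =
      if a = b then X - C (z (a + 1))
      else if a + 1 = b then 1
      else if b + 1 = a then -(X * C (Q (b + 1) * z (b + 1)))
      else 0 := by
  subst hp; subst hq; rfl

theorem det_tmat : ∀ n, (tmat z Q n).det = Spoly z Q n := by
  intro n
  induction n using Nat.strong_induction_on with
  | _ n ih =>
    match n with
    | 0 => simp [Spoly_zero]
    | 1 =>
      rw [det_fin_one, Spoly_one]
      simp [tmat]
    | (m + 2) =>
      have ih1 := ih (m + 1) (by omega)
      have ih0 := ih m (by omega)
      set j₁ : Fin (m + 2) := ⟨m, by omega⟩ with hj₁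
      set j₂ : Fin (m + 2) := Fin.last (m + 1) with hj₂
      have hj₁v : (j₁ : ℕ) = m := rfl
      have hj₂v : (j₂ : ℕ) = m + 1 := rfl
      have hA : ∀ j : Fin (m + 2), j ∉ ({j₁, j₂} : Finset (Fin (m + 2))) →
          tmat z Q (m + 2) (Fin.last (m + 1)) j = 0 := by
        intro j hj
        simp only [Finset.mem_insert, Finset.mem_singleton, not_or] at hj
        have h1 : (j : ℕ) ≠ m := fun h => hj.1 (Fin.ext (h.trans hj₁v.symm))
        have h2 : (j : ℕ) ≠ m + 1 := fun h => hj.2 (Fin.ext (h.trans hj₂v.symm))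
        rw [tmat_apply z Q _ _ (m + 1) (j : ℕ) (Fin.val_last _) rfl,
          if_neg (by omega), if_neg (by omega), if_neg (by omega)]
      rw [det_succ_row (tmat z Q (m + 2)) (Fin.last (m + 1))]
      rw [← Finset.sum_subset (Finset.subset_univ ({j₁, j₂} : Finset (Fin (m + 2))))
        (fun j _ hj => by rw [hA j hj]; ring)]
      have hne : j₁ ≠ j₂ := by
        intro h
        have := congrArg Fin.val h
        rw [hj₁v, hj₂v] at this
        omega
      rw [Finset.sum_insert (by simpa using hne), Finset.sum_singleton]
      -- the diagonal term
      have hd : tmat z Q (m + 2) (Fin.last (m + 1)) j₂ = X - C (z (m + 2)) := by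
        rw [tmat_apply z Q _ _ (m + 1) (m + 1) (Fin.val_last _) hj₂v, if_pos rfl]
      have hsub2 : (tmat z Q (m + 2)).submatrix (Fin.last (m + 1)).succAbove j₂.succAbove
          = tmat z Q (m + 1) := by
        rw [hj₂, Fin.succAbove_last]
        exact tmat_submatrix z Q _ _ (fun k => rfl) (fun k => rfl)
      -- the subdiagonal term
      have hs : tmat z Q (m + 2) (Fin.last (m + 1)) j₁
          = -(X * C (Q (m + 1) * z (m + 1))) := by
        rw [tmat_apply z Q _ _ (m + 1) m (Fin.val_last _) hj₁v,
          if_neg (by omega), if_neg (by omega), if_pos rfl]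
      have hcol : j₁.succAbove (Fin.last m) = Fin.last (m + 1) := by
        rw [Fin.succAbove_of_le_castSucc _ _ (by
          rw [Fin.le_castSucc_iff]
          exact Fin.mk_lt_mk.2 (by omega))]
        rfl
      have hcolv : ((j₁.succAbove (Fin.last m) : Fin (m + 2)) : ℕ) = m + 1 := by
        rw [hcol]; rfl
      have hB : ((tmat z Q (m + 2)).submatrix (Fin.last (m + 1)).succAbove
          j₁.succAbove).det = (tmat z Q m).det := by
        rw [Fin.succAbove_last]
        rw [det_succ_column _ (Fin.last m)]
        rw [Finset.sum_eq_single_of_mem (Fin.last m) (Finset.mem_univ _) ?_]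
        · have hent : (tmat z Q (m + 2)).submatrix Fin.castSucc j₁.succAbove
              (Fin.last m) (Fin.last m) = 1 := by
            rw [submatrix_apply,
              tmat_apply z Q _ _ m (m + 1) (by simp) hcolv,
              if_neg (by omega), if_pos rfl]
          rw [hent, Fin.succAbove_last]
          have hrest : ((tmat z Q (m + 2)).submatrix Fin.castSucc j₁.succAbove).submatrix
              Fin.castSucc Fin.castSucc = tmat z Q m := by
            rw [submatrix_submatrix]
            refine tmat_submatrix z Q _ _ (fun k => by simp) (fun k => ?_)
            show ((j₁.succAbove (Fin.castSucc k) : Fin (m + 2)) : ℕ) = k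
            rw [Fin.succAbove_of_castSucc_lt _ _ (by
              rw [Fin.castSucc_lt_iff_succ_le]
              exact Fin.mk_le_mk.2 k.isLt)]
            simp
          rw [hrest]
          have hsgn : ((Fin.last m : ℕ) + (Fin.last m : ℕ)) = 2 * m := by
            rw [Fin.val_last]; ring
          rw [hsgn, pow_mul, neg_one_sq, one_pow, one_mul, one_mul]
        · intro i _ hi
          have hiv : (i : ℕ) ≠ m := fun h => hi (Fin.ext (h.trans (Fin.val_last m).symm))
          have hilt := i.isLt
          have : (tmat z Q (m + 2)).submatrix Fin.castSucc j₁.succAbove i (Fin.last m)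
              = 0 := by
            rw [submatrix_apply,
              tmat_apply z Q _ _ (i : ℕ) (m + 1) (by simp) hcolv,
              if_neg (by omega), if_neg (by omega), if_neg (by omega)]
          rw [this]; ring
      have hsgn1 : ((-1 : Polynomial K)) ^ ((Fin.last (m + 1) : ℕ) + (j₁ : ℕ)) = -1 := by
        have h : ((Fin.last (m + 1) : ℕ) + (j₁ : ℕ)) = 2 * m + 1 := by
          simp only [Fin.val_last, hj₁v]; omega
        rw [h, pow_succ, pow_mul, neg_one_sq, one_pow, one_mul]
      have hsgn2 : ((-1 : Polynomial K)) ^ ((Fin.last (m + 1) : ℕ) + (j₂ : ℕ)) = 1 := by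
        have h : ((Fin.last (m + 1) : ℕ) + (j₂ : ℕ)) = 2 * (m + 1) := by
          simp only [Fin.val_last, hj₂v]; omega
        rw [h, pow_mul, neg_one_sq, one_pow]
      rw [hd, hs, hsub2, hB, ih1, ih0, hsgn1, hsgn2, Spoly_two_step]
      ring

end Aux

/-- With `L = M N⁻¹` the Lax matrix of the relativistic Toda lattice,
`det(ζE - L) = Σ_{i=0}^{n} (-1)^i F_i(z,Q) ζ^{n-i}`. -/
theorem stmt3 {K : Type*} [Field K] (n : ℕ) (z Q : ℕ → K) (hQn : Q n = 0)
    (M N : Matrix (Fin n) (Fin n) K)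
    (hM : ∀ p q : Fin n, M p q =
      if p = q then z ((p : ℕ) + 1) else if (p : ℕ) + 1 = (q : ℕ) then -1 else 0)
    (hN : ∀ p q : Fin n, N p q =
      if p = q then 1
      else if (q : ℕ) + 1 = (p : ℕ) then -(Q ((q : ℕ) + 1) * z ((q : ℕ) + 1)) else 0) :
    (M * N⁻¹).charpoly =
      ∑ i ∈ Finset.range (n + 1),
        (-1 : Polynomial K) ^ i * Polynomial.C (todaF n z Q i) * Polynomial.X ^ (n - i) := by
  classical
  have hNdet : N.det = 1 := by
    rw [Matrix.det_of_lowerTriangular N ?_]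
    · rw [Finset.prod_congr rfl fun i _ => by rw [hN, if_pos rfl], Finset.prod_const_one]
    · intro i j hij
      rw [OrderDual.toDual_lt_toDual] at hij
      have hv : (i : ℕ) < (j : ℕ) := hij
      rw [hN, if_neg (ne_of_lt hij), if_neg (by omega)]
  have hU : IsUnit N.det := by rw [hNdet]; exact isUnit_one
  have hmul : N * N⁻¹ = 1 := mul_nonsing_inv N hU
  have hkey : charmatrix (M * N⁻¹) = ((X : Polynomial K) • (N.map (C : K →+* Polynomial K)) - M.map C) * ((N⁻¹).map C) := by
    rw [charmatrix, sub_mul, smul_mul_assoc, ← Matrix.map_mul, hmul, Matrix.map_one C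
      (map_zero C) (map_one C), ← Matrix.map_mul, RingHom.mapMatrix_apply,
      Matrix.scalar_apply, smul_one_eq_diagonal]
  have hdet2 : ((N⁻¹).map (C : K →+* Polynomial K)).det = 1 := by
    rw [← RingHom.mapMatrix_apply, ← RingHom.map_det, Matrix.det_nonsing_inv, hNdet]
    simp
  have htm : (X : Polynomial K) • (N.map (C : K →+* Polynomial K)) - M.map C = tmat z Q n := by
    refine Matrix.ext fun p q => ?_
    simp only [Matrix.sub_apply, Matrix.smul_apply, map_apply, smul_eq_mul, tmat, of_apply]
    rw [hM, hN]
    rcases eq_or_ne p q with rfl | hpq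
    · rw [if_pos rfl, if_pos rfl, if_pos rfl]
      simp
    · have hv : (p : ℕ) ≠ (q : ℕ) := fun h => hpq (Fin.ext h)
      rw [if_neg hpq, if_neg hpq, if_neg hv]
      rcases eq_or_ne ((p : ℕ) + 1) (q : ℕ) with h2 | h2
      · rw [if_pos h2, if_pos h2, if_neg (by omega)]
        simp
      · rw [if_neg h2, if_neg h2]
        rcases eq_or_ne ((q : ℕ) + 1) (p : ℕ) with h3 | h3
        · rw [if_pos h3, if_pos h3, C_neg, C_0, sub_zero, mul_neg]
        · rw [if_neg h3, if_neg h3, C_0, mul_zero, sub_zero]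
  have : (M * N⁻¹).charpoly = Spoly z Q n := by
    rw [Matrix.charpoly, hkey, det_mul, hdet2, mul_one, htm, det_tmat]
  rw [this]
  have hP : Spoly z Q n = Ppoly z Q n := by
    cases n with
    | zero => simp [Spoly, Ppoly, todaF_zero, todaG_zero]
    | succ m =>
      rw [Ppoly_eq, hQn, zero_mul, map_zero, zero_mul, add_zero]
  rw [hP, Ppoly]
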